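/- Let K be a quadratic number field in which 2 is inert, so that 𝔓 = 2·O_K is a prime ideal of O_K. Let p be an odd prime and let (a, b, c) ∈ O_K³ be a non-trivial solution of a^p + b^p + c^p = 0 with 𝔓 ∤ abc. Let E be the Frey curve Y² = X(X − a^p)(X + b^p), with discriminant Δ = 16·a^{2p}·b^{2p}·c^{2p} and j-invariant j = c₄³/Δ where c₄ = 16(a^{2p} − b^p c^p). Then ord_𝔓(Δ) = 4 and j is integral at 𝔓, i.e., ord_𝔓(j) ≥ 0 (so E has potentially good reduction at 𝔓). -/

import Mathlib

open NumberField IsDedekindDomain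

open scoped Classical in
/-- The normalized `v`-adic valuation `ord_v : K → ℤ ∪ {+∞}` on the fraction field `K`
of a Dedekind domain `R`, attached to a non-zero prime `v` of `R`; `ord_v (0) = +∞`. -/
noncomputable def ordAt {R : Type*} [CommRing R] [IsDedekindDomain R] {K : Type*} [Field K]
    [Algebra R K] [IsFractionRing R K] (v : HeightOneSpectrum R) (x : K) : WithTop ℤ :=
  if hx : x = 0 then ⊤
  else ((-Multiplicative.toAdd (WithZero.unzero (((v.valuation K).ne_zero_iff).mpr hx)) : ℤ) : WithTop ℤ)

open scoped Classical in
lemma ordAt_eq_of_valuation {R : Type*} [CommRing R] [IsDedekindDomain R] {K : Type*} [Field K]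
    [Algebra R K] [IsFractionRing R K] (v : HeightOneSpectrum R) {x : K} (hx : x ≠ 0) (n : ℤ)
    (h : v.valuation K x = ((Multiplicative.ofAdd (-n) : Multiplicative ℤ) : WithZero (Multiplicative ℤ))) :
    ordAt v x = (n : WithTop ℤ) := by
  rw [ordAt, dif_neg hx]
  have hu : WithZero.unzero (((v.valuation K).ne_zero_iff).mpr hx) = Multiplicative.ofAdd (-n) := by
    have h' := h
    rw [← WithZero.coe_unzero (((v.valuation K).ne_zero_iff).mpr hx)] at h'
    exact_mod_cast h' 
  have hn : (-Multiplicative.toAdd (WithZero.unzero (((v.valuation K).ne_zero_iff).mpr hx)) : ℤ) = n := by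
    rw [hu]; simp
  exact_mod_cast hn

open scoped Classical in
lemma ordAt_nonneg_of_valuation {R : Type*} [CommRing R] [IsDedekindDomain R] {K : Type*} [Field K]
    [Algebra R K] [IsFractionRing R K] (v : HeightOneSpectrum R) {x : K} (hx : x ≠ 0)
    (h : v.valuation K x ≤ 1) : 0 ≤ ordAt v x := by
  rw [ordAt, dif_neg hx]
  have hu : WithZero.unzero (((v.valuation K).ne_zero_iff).mpr hx) ≤ 1 := by
    rw [← WithZero.coe_le_coe, WithZero.coe_unzero, WithZero.coe_one]
    exact h
  have : Multiplicative.toAdd (WithZero.unzero (((v.valuation K).ne_zero_iff).mpr hx)) ≤ 0 :=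
    Multiplicative.toAdd_le.mpr hu
  exact_mod_cast neg_nonneg.mpr this

/-- **Behaviour of the Frey curve at an inert prime above 2 (Lemma 4.1).**
Let `K` be a quadratic number field in which `2` is inert, so `𝔓 = 2 𝓞 K` is prime,
`p` an odd prime, and `(a, b, c)` a non-trivial solution of `a ^ p + b ^ p + c ^ p = 0`
in `𝓞 K` with `𝔓 ∤ abc`. Then the discriminant `Δ = 16 a^{2p} b^{2p} c^{2p}` of the
Frey curve `Y² = X(X − aᵖ)(X + bᵖ)` satisfies `ord_𝔓(Δ) = 4`, and its `j`-invariant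
`j = c₄³ / Δ`, with `c₄ = 16(a^{2p} − bᵖcᵖ)`, satisfies `ord_𝔓(j) ≥ 0` (potentially
good reduction at `𝔓`). -/
theorem frey_curve_inert_two (K : Type*) [Field K] [NumberField K]
    (hdeg : Module.finrank ℚ K = 2)
    (v : HeightOneSpectrum (𝓞 K)) (hv : v.asIdeal = Ideal.span {(2 : 𝓞 K)})
    (p : ℕ) (hp : p.Prime) (hodd : Odd p)
    (a b c : 𝓞 K) (habc : a * b * c ≠ 0) (hfermat : a ^ p + b ^ p + c ^ p = 0)
    (hndvd : a * b * c ∉ v.asIdeal) :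
    ordAt v (algebraMap (𝓞 K) K (16 * a ^ (2 * p) * b ^ (2 * p) * c ^ (2 * p))) = 4 ∧
    0 ≤ ordAt v ((algebraMap (𝓞 K) K (16 * (a ^ (2 * p) - b ^ p * c ^ p))) ^ 3 /
      algebraMap (𝓞 K) K (16 * a ^ (2 * p) * b ^ (2 * p) * c ^ (2 * p))) := by
  have h2 : (2 : 𝓞 K) ≠ 0 := two_ne_zero
  have h16 : (16 : 𝓞 K) = 2 ^ 4 := by norm_num
  -- valuation of 2 is ofAdd(-1)
  have hval2 : v.intValuation 2 = Multiplicative.ofAdd (-1 : ℤ) :=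
    v.intValuation_singleton h2 hv
  -- valuation of abc is 1
  have habc1 : v.intValuation (a * b * c) = 1 := by
    have hle := v.intValuation_le_one (a * b * c)
    rcases lt_or_eq_of_le hle with hlt | heq
    · exfalso
      have := (v.intValuation_lt_one_iff_dvd (a * b * c)).mp hlt
      exact hndvd (Ideal.dvd_span_singleton.mp this)
    · exact heq
  -- valuation of Δ
  have hDelta : v.intValuation (16 * a ^ (2 * p) * b ^ (2 * p) * c ^ (2 * p)) =
      ((Multiplicative.ofAdd (-4 : ℤ) : Multiplicative ℤ) : WithZero (Multiplicative ℤ)) := by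
    have hrw : (16 : 𝓞 K) * a ^ (2 * p) * b ^ (2 * p) * c ^ (2 * p) =
        2 ^ 4 * (a * b * c) ^ (2 * p) := by rw [h16]; ring
    rw [hrw, map_mul, map_pow, map_pow, hval2, habc1, one_pow, mul_one, ← WithZero.coe_pow]
    rfl
  have hDne : (16 : 𝓞 K) * a ^ (2 * p) * b ^ (2 * p) * c ^ (2 * p) ≠ 0 := by
    have h16ne : (16 : 𝓞 K) ≠ 0 := by
      rw [h16]; exact pow_ne_zero _ h2
    have ha : a ≠ 0 := fun h => habc (by simp [h])
    have hb : b ≠ 0 := fun h => habc (by simp [h])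
    have hc : c ≠ 0 := fun h => habc (by simp [h])
    exact mul_ne_zero (mul_ne_zero (mul_ne_zero h16ne (pow_ne_zero _ ha))
      (pow_ne_zero _ hb)) (pow_ne_zero _ hc)
  have hDK : algebraMap (𝓞 K) K (16 * a ^ (2 * p) * b ^ (2 * p) * c ^ (2 * p)) ≠ 0 := by
    rw [map_ne_zero_iff _ (IsFractionRing.injective (𝓞 K) K)]
    exact hDne
  constructor
  · exact ordAt_eq_of_valuation v hDK 4 (by
      rw [HeightOneSpectrum.valuation_of_algebraMap, hDelta])
  · by_cases hN : algebraMap (𝓞 K) K (16 * (a ^ (2 * p) - b ^ p * c ^ p)) = 0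
    · rw [hN]
      simp only [zero_pow, ne_eq, OfNat.ofNat_ne_zero, not_false_eq_true, zero_div]
      rw [ordAt, dif_pos rfl]
      exact le_top
    · have hjne : (algebraMap (𝓞 K) K (16 * (a ^ (2 * p) - b ^ p * c ^ p))) ^ 3 /
          algebraMap (𝓞 K) K (16 * a ^ (2 * p) * b ^ (2 * p) * c ^ (2 * p)) ≠ 0 :=
        div_ne_zero (pow_ne_zero 3 hN) hDK
      apply ordAt_nonneg_of_valuation v hjne
      rw [map_div₀, map_pow]
      have hNval : v.valuation K (algebraMap (𝓞 K) K (16 * (a ^ (2 * p) - b ^ p * c ^ p))) ≤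
          ((Multiplicative.ofAdd (-4 : ℤ) : Multiplicative ℤ) : WithZero (Multiplicative ℤ)) := by
        rw [HeightOneSpectrum.valuation_of_algebraMap, map_mul]
        calc v.intValuation 16 * v.intValuation (a ^ (2 * p) - b ^ p * c ^ p)
            ≤ v.intValuation 16 * 1 := by
              exact mul_le_mul_right (v.intValuation_le_one _) _
          _ = v.intValuation 16 := mul_one _
          _ = ((Multiplicative.ofAdd (-4 : ℤ) : Multiplicative ℤ) : WithZero (Multiplicative ℤ)) := by
              rw [h16, map_pow, hval2, ← WithZero.coe_pow]; rfl
      have hDval : v.valuation K (algebraMap (𝓞 K) K (16 * a ^ (2 * p) * b ^ (2 * p) * c ^ (2 * p))) =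
          ((Multiplicative.ofAdd (-4 : ℤ) : Multiplicative ℤ) : WithZero (Multiplicative ℤ)) := by
        rw [HeightOneSpectrum.valuation_of_algebraMap, hDelta]
      rw [hDval]
      rw [div_le_one₀ (WithZero.zero_lt_coe _)]
      calc (v.valuation K (algebraMap (𝓞 K) K (16 * (a ^ (2 * p) - b ^ p * c ^ p)))) ^ 3
          ≤ ((Multiplicative.ofAdd (-4 : ℤ) : Multiplicative ℤ) : WithZero (Multiplicative ℤ)) ^ 3 :=
            pow_le_pow_left' hNval 3
        _ = ((Multiplicative.ofAdd (-12 : ℤ) : Multiplicative ℤ) : WithZero (Multiplicative ℤ)) := by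
            rw [← WithZero.coe_pow]; rfl
        _ ≤ _ := by rw [WithZero.coe_le_coe, Multiplicative.ofAdd_le]; norm_num
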